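/- Let n be even with n ≥ 4, and let 2 ≤ z ≤ ⌊(n-1)/2⌋. Let x : Fin n → ℝ be sorted and suppose there exists an optimal utilitarian location y* with y* ≥ x_{n/2 + 1}. Then OPT_SC(x_{n/2 + 1}, x, z) ≤ ((n-2)/(n - 2z + 2)) · OPT*_SC(x, z). -/

import Mathlib

/-- Utilitarian social cost with `z` outliers of placing the facility at `y`:
minimum over sets `S` of `n - z` non-outliers of the total distance. -/
noncomputable def OPTsc (n z : ℕ) (x : Fin n → ℝ) (y : ℝ) : ℝ :=
  sInf {c : ℝ | ∃ S : Finset (Fin n), S.card = n - z ∧ c = ∑ i ∈ S, |y - x i|}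

/-- Optimal utilitarian social cost with `z` outliers. -/
noncomputable def OPTscStar (n z : ℕ) (x : Fin n → ℝ) : ℝ :=
  sInf (Set.range (OPTsc n z x))

theorem stmt_16 (n z : ℕ) (hn : 4 ≤ n) (heven : Even n) (hz1 : 2 ≤ z) (hz2 : z ≤ (n - 1) / 2)
    (x : Fin n → ℝ) (hx : Monotone x)
    (hopt : ∃ ystar : ℝ, OPTsc n z x ystar = OPTscStar n z x ∧ x ⟨n / 2, by omega⟩ ≤ ystar) :
    OPTsc n z x (x ⟨n / 2, by omega⟩) ≤
      (((n : ℝ) - 2) / ((n : ℝ) - 2 * z + 2)) * OPTscStar n z x := by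
  obtain ⟨k, hk⟩ := heven
  have hk2 : n / 2 = k := by omega
  have hzk : z ≤ k - 1 := by omega
  obtain ⟨y, hy, hym⟩ := hopt
  set m : ℝ := x ⟨n / 2, by omega⟩ with hmdef
  -- the defining sets are finite and nonempty
  have hfin : ∀ w : ℝ,
      {c : ℝ | ∃ S : Finset (Fin n), S.card = n - z ∧ c = ∑ i ∈ S, |w - x i|}.Finite := by
    intro w
    apply Set.Finite.subset (Set.finite_range fun S : Finset (Fin n) => ∑ i ∈ S, |w - x i|)
    rintro c ⟨S, -, rfl⟩
    exact ⟨S, rfl⟩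
  obtain ⟨S0, -, hS0⟩ := Finset.exists_subset_card_eq (s := (Finset.univ : Finset (Fin n))) (n := n - z)
    (by simp only [Finset.card_univ, Fintype.card_fin]; omega)
  have hne : ∀ w : ℝ,
      {c : ℝ | ∃ S : Finset (Fin n), S.card = n - z ∧ c = ∑ i ∈ S, |w - x i|}.Nonempty :=
    fun w => ⟨_, S0, hS0, rfl⟩
  -- the optimum at y is attained by some set S
  have hmem : OPTsc n z x y ∈
      {c : ℝ | ∃ S : Finset (Fin n), S.card = n - z ∧ c = ∑ i ∈ S, |y - x i|} :=
    (hne y).csInf_mem (hfin y)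
  obtain ⟨S, hScard, hSval⟩ := hmem
  set K : ℝ := ∑ i ∈ S, |y - x i| with hKdef
  have hK0 : 0 ≤ K := Finset.sum_nonneg fun i _ => abs_nonneg _
  set a : ℝ := y - m with hadef
  have ha0 : 0 ≤ a := by simp [hadef]; linarith [hym]
  -- left points
  set p : Fin n → Prop := fun i => (i : ℕ) ≤ n / 2 with hpdef
  have hxi : ∀ i : Fin n, p i → x i ≤ m := by
    intro i hi
    exact hx (show i ≤ ⟨n / 2, by omega⟩ from hi)
  -- cardinality of all left points
  have hT : (Finset.univ.filter p) = Finset.Iic (⟨n / 2, by omega⟩ : Fin n) := by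
    ext i
    simp [hpdef, Fin.le_def]
  have hTcard : (Finset.univ.filter p).card = n / 2 + 1 := by
    rw [hT, Fin.card_Iic]
  -- at least n/2+1-z left points survive in S
  set c : ℕ := (S.filter p).card with hcdef
  have hcard : n / 2 + 1 ≤ c + z := by
    have h1 : (Finset.univ.filter p) ∩ S = S.filter p := by
      ext i; simp [and_comm]
    have h2 : ((Finset.univ.filter p) ∩ S).card + ((Finset.univ.filter p) \ S).card
        = (Finset.univ.filter p).card := Finset.card_inter_add_card_sdiff _ _
    have h3 : ((Finset.univ.filter p) \ S).card ≤ (Finset.univ \ S).card :=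
      Finset.card_le_card (Finset.sdiff_subset_sdiff (Finset.subset_univ _) le_rfl)
    have h4 : (Finset.univ \ S).card = z := by
      rw [Finset.card_sdiff_of_subset (Finset.subset_univ _), Finset.card_univ, Fintype.card_fin, hScard]
      omega
    rw [h1] at h2
    omega
  -- each left survivor pays at least a at y
  have hlow : (c : ℝ) * a ≤ K := by
    have h1 : (c : ℝ) * a = ∑ _i ∈ S.filter p, a := by
      rw [Finset.sum_const, nsmul_eq_mul]
    rw [h1]
    refine le_trans (Finset.sum_le_sum ?_) (Finset.sum_le_sum_of_subset_of_nonneg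
      (Finset.filter_subset _ _) fun i _ _ => abs_nonneg _)
    intro i hi
    have hxm := hxi i (Finset.mem_filter.mp hi).2
    have : |y - x i| = y - x i := abs_of_nonneg (by linarith)
    rw [this]; simp [hadef, hmdef]; linarith
  -- key per-point bound summed over S
  have hkey : ∑ i ∈ S, |m - x i| ≤ K + (↑(n - z)) * a - 2 * a * c := by
    have h1 : ∑ i ∈ S, |m - x i| ≤
        ∑ i ∈ S, (|y - x i| + a - 2 * a * (if p i then 1 else 0)) := by
      refine Finset.sum_le_sum fun i _ => ?_
      by_cases hi : p i
      · have hxm := hxi i hi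
        have h2 : |m - x i| = m - x i := abs_of_nonneg (by linarith)
        have h3 : |y - x i| = y - x i := abs_of_nonneg (by linarith)
        rw [h2, h3, if_pos hi]
        simp [hadef]; linarith
      · rw [if_neg hi]
        have := abs_sub_le m y (x i)
        have h4 : |m - y| = a := by rw [abs_sub_comm]; exact abs_of_nonneg ha0
        simp only [mul_zero, sub_zero]
        linarith
    have h2 : ∑ i ∈ S, (|y - x i| + a - 2 * a * (if p i then 1 else 0))
        = K + (S.card : ℝ) * a - 2 * a * c := by
      rw [Finset.sum_sub_distrib, Finset.sum_add_distrib, Finset.sum_const, nsmul_eq_mul,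
        ← Finset.mul_sum, Finset.sum_boole, hcdef]
    rw [hScard] at h2
    exact h1.trans_eq h2
  -- put things together
  rw [← hy, hSval]
  have hub : OPTsc n z x m ≤ ∑ i ∈ S, |m - x i| :=
    csInf_le (hfin m).bddBelow ⟨S, hScard, rfl⟩
  have hnz : (↑(n - z) : ℝ) = (n : ℝ) - z := by
    rw [Nat.cast_sub (by omega)]
  have hcR : (k : ℝ) + 1 - z ≤ (c : ℝ) := by
    have : (k:ℝ) + 1 ≤ (c:ℝ) + z := by exact_mod_cast (by omega : k + 1 ≤ c + z)
    linarith
  have hnR : (n : ℝ) = 2 * k := by exact_mod_cast (by omega : n = 2 * k)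
  have hzR : (z : ℝ) ≤ (k : ℝ) - 1 := by
    have : (z:ℝ) + 1 ≤ (k:ℝ) := by exact_mod_cast (by omega : z + 1 ≤ k)
    linarith
  have hz2R : (2 : ℝ) ≤ z := by exact_mod_cast hz1
  have hdenpos : (0 : ℝ) < (n : ℝ) - 2 * z + 2 := by rw [hnR]; linarith
  rw [div_mul_eq_mul_div, le_div_iff₀ hdenpos]
  -- from hkey : OPT(m) ≤ K + (n-z)a - 2ac ≤ K + (z-2)a
  have hstep : OPTsc n z x m ≤ K + ((z : ℝ) - 2) * a := by
    have h5 : 2 * a * ((k:ℝ) + 1 - z) ≤ 2 * a * c :=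
      mul_le_mul_of_nonneg_left hcR (by linarith)
    calc OPTsc n z x m ≤ K + (↑(n - z)) * a - 2 * a * c := le_trans hub hkey
      _ ≤ K + ((n:ℝ) - z) * a - 2 * a * ((k:ℝ) + 1 - z) := by rw [hnz]; linarith
      _ = K + ((z : ℝ) - 2) * a := by rw [hnR]; ring
  have hstep2 : ((z : ℝ) - 2) * a * ((k:ℝ) + 1 - z) ≤ ((z : ℝ) - 2) * K := by
    have h6 : a * ((k:ℝ) + 1 - z) ≤ a * c := mul_le_mul_of_nonneg_left hcR ha0
    have h7 : a * ((k:ℝ) + 1 - z) ≤ K := by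
      calc a * ((k:ℝ) + 1 - z) ≤ a * c := h6
        _ = (c:ℝ) * a := by ring
        _ ≤ K := hlow
    calc ((z : ℝ) - 2) * a * ((k:ℝ) + 1 - z) = ((z : ℝ) - 2) * (a * ((k:ℝ)+1-z)) := by ring
      _ ≤ ((z : ℝ) - 2) * K := mul_le_mul_of_nonneg_left h7 (by linarith)
  have h8 : OPTsc n z x m * ((n:ℝ) - 2*z + 2) ≤ (K + ((z:ℝ) - 2) * a) * ((n:ℝ) - 2*z + 2) :=
    mul_le_mul_of_nonneg_right hstep hdenpos.le
  have h9 : (K + ((z:ℝ) - 2) * a) * ((n:ℝ) - 2*z + 2) ≤ ((n:ℝ) - 2) * K := by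
    rw [hnR]; nlinarith [hstep2, hK0]
  linarith
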